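/- Let a, b, c be real numbers with 0 < a ≤ b ≤ c and c < a + b. In the plane let B = (−a/2, 0), C = (a/2, 0), and let A = (A_x, A_y) be a point with A_y > 0, dist(A, C) = b and dist(A, B) = c. Define φ* by tan φ* = 2·√(c² − (b−a)²) / ( √((3b−a)² − c²) + √((b+a)² − c²) ), and set D* = (0, (a/2)·tan φ*). Then 2·dist(B, D*)/a = (dist(A, D*) + dist(B, D*))/b. -/

import Mathlib

/-- A point of the plane given by its two coordinates. -/
noncomputable def pt (x y : ℝ) : EuclideanSpace ℝ (Fin 2) := !₂[x, y]

lemma dist_pt (x y u v : ℝ) :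
    dist (pt x y) (pt u v) = Real.sqrt ((x - u) ^ 2 + (y - v) ^ 2) := by
  simp [pt, EuclideanSpace.dist_eq, Fin.sum_univ_two, Real.dist_eq, sq_abs]

/-- At the point `D* = (0, (a/2)·tan φ*)` on the perpendicular bisector of
`B = (−a/2, 0)` and `C = (a/2, 0)`, where
`tan φ* = 2√(c² − (b−a)²) / (√((3b−a)² − c²) + √((b+a)² − c²))`,
the two branches of the competitive-ratio function are equal:
`2·dist(B,D*)/a = (dist(A,D*) + dist(B,D*))/b`. -/
theorem balance_point_equality
    (a b c Ax Ay : ℝ) (ha : 0 < a) (hab : a ≤ b) (hbc : b ≤ c) (htri : c < a + b)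
    (A B C : EuclideanSpace ℝ (Fin 2))
    (hB : B = pt (-a / 2) 0) (hC : C = pt (a / 2) 0) (hA : A = pt Ax Ay)
    (hAy : 0 < Ay) (hAC : dist A C = b) (hAB : dist A B = c)
    (φ : ℝ)
    (hφ : Real.tan φ = 2 * Real.sqrt (c ^ 2 - (b - a) ^ 2) /
        (Real.sqrt ((3 * b - a) ^ 2 - c ^ 2) + Real.sqrt ((b + a) ^ 2 - c ^ 2)))
    (Dstar : EuclideanSpace ℝ (Fin 2))
    (hD : Dstar = pt 0 ((a / 2) * Real.tan φ)) :
    2 * dist B Dstar / a = (dist A Dstar + dist B Dstar) / b := by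
  have hc0 : 0 < c := lt_of_lt_of_le (lt_of_lt_of_le ha hab) hbc
  have hb0 : 0 < b := lt_of_lt_of_le ha hab
  set s1 := Real.sqrt (c ^ 2 - (b - a) ^ 2) with hs1def
  set s2 := Real.sqrt ((3 * b - a) ^ 2 - c ^ 2) with hs2def
  set s3 := Real.sqrt ((b + a) ^ 2 - c ^ 2) with hs3def
  have hr1 : (0:ℝ) < c ^ 2 - (b - a) ^ 2 := by nlinarith
  have hr2 : (0:ℝ) < (3 * b - a) ^ 2 - c ^ 2 := by nlinarith
  have hr3 : (0:ℝ) < (b + a) ^ 2 - c ^ 2 := by nlinarith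
  have hs1 : s1 ^ 2 = c ^ 2 - (b - a) ^ 2 := Real.sq_sqrt hr1.le
  have hs2 : s2 ^ 2 = (3 * b - a) ^ 2 - c ^ 2 := Real.sq_sqrt hr2.le
  have hs3 : s3 ^ 2 = (b + a) ^ 2 - c ^ 2 := Real.sq_sqrt hr3.le
  have hs1pos : 0 < s1 := Real.sqrt_pos.mpr hr1
  have hs2pos : 0 < s2 := Real.sqrt_pos.mpr hr2
  have hs3pos : 0 < s3 := Real.sqrt_pos.mpr hr3
  set t := Real.tan φ with htdef
  have hS : (0:ℝ) < s2 + s3 := by linarith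
  have htS : t * (s2 + s3) = 2 * s1 := by
    rw [hφ]; field_simp
  -- distances from hypotheses
  have hb2 : (Ax - a / 2) ^ 2 + Ay ^ 2 = b ^ 2 := by
    have : Real.sqrt ((Ax - a / 2) ^ 2 + (Ay - 0) ^ 2) = b := by
      rw [← dist_pt, ← hA, ← hC]; exact hAC
    have h := congrArg (· ^ 2) this
    simp only [Real.sq_sqrt (by positivity : (0:ℝ) ≤ (Ax - a / 2) ^ 2 + (Ay - 0) ^ 2)] at h
    linear_combination h
  have hc2 : (Ax + a / 2) ^ 2 + Ay ^ 2 = c ^ 2 := by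
    have : Real.sqrt ((Ax - (-a / 2)) ^ 2 + (Ay - 0) ^ 2) = c := by
      rw [← dist_pt, ← hA, ← hB]; exact hAB
    have h := congrArg (· ^ 2) this
    simp only [Real.sq_sqrt (by positivity : (0:ℝ) ≤ (Ax - (-a / 2)) ^ 2 + (Ay - 0) ^ 2)] at h
    linear_combination h
  have hAx : 2 * a * Ax = c ^ 2 - b ^ 2 := by linear_combination hc2 - hb2
  have hsum : Ax ^ 2 + Ay ^ 2 = (b ^ 2 + c ^ 2) / 2 - a ^ 2 / 4 := by
    linear_combination (hb2 + hc2) / 2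
  -- 2 a Ay = s1 * s3
  have hAy2 : 2 * a * Ay = s1 * s3 := by
    have hsq : (2 * a * Ay) ^ 2 = (s1 * s3) ^ 2 := by
      have : (s1 * s3) ^ 2 = (c ^ 2 - (b - a) ^ 2) * ((b + a) ^ 2 - c ^ 2) := by
        rw [mul_pow, hs1, hs3]
      have hAx2 : (2 * a * Ax - a ^ 2) ^ 2 = (c ^ 2 - b ^ 2 - a ^ 2) ^ 2 := by
        linear_combination (2 * a * Ax - a ^ 2 + c ^ 2 - b ^ 2 - a ^ 2) * hAx
      rw [this]
      linear_combination 4 * a ^ 2 * hb2 - hAx2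
    have h1 : 2 * a * Ay = Real.sqrt ((2 * a * Ay) ^ 2) :=
      (Real.sqrt_sq (by positivity)).symm
    have h2 : s1 * s3 = Real.sqrt ((s1 * s3) ^ 2) :=
      (Real.sqrt_sq (by positivity)).symm
    rw [h1, h2, hsq]
  -- the key algebraic identity
  have hkey0 : b * (b - a) * t ^ 2 + a * Ay * t - s1 ^ 2 / 2 = 0 := by
    have hmul : (b * (b - a) * t ^ 2 + a * Ay * t - s1 ^ 2 / 2) * (s2 + s3) ^ 2 = 0 := by
      linear_combination (b * (b - a) * (t * (s2 + s3) + 2 * s1) + a * Ay * (s2 + s3)) * htS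
        + (s1 * (s2 + s3)) * hAy2 + (s1 ^ 2 / 2) * (hs3 - hs2)
    rcases mul_eq_zero.mp hmul with h | h
    · exact h
    · exact absurd h (by positivity)
  -- distances to Dstar
  have hBD : dist B Dstar = Real.sqrt (a ^ 2 / 4 + (a / 2 * t) ^ 2) := by
    rw [hB, hD, dist_pt]
    norm_num
    congr 1
    ring
  have hAD : dist A Dstar = Real.sqrt (Ax ^ 2 + (Ay - a / 2 * t) ^ 2) := by
    rw [hA, hD, dist_pt]
    congr 1
    ring
  have hBD2 : (dist B Dstar) ^ 2 = a ^ 2 / 4 + (a / 2 * t) ^ 2 := by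
    rw [hBD]; exact Real.sq_sqrt (by positivity)
  have hAD2 : (dist A Dstar) ^ 2 = Ax ^ 2 + (Ay - a / 2 * t) ^ 2 := by
    rw [hAD]; exact Real.sq_sqrt (by positivity)
  -- squared form of the goal
  have hfin2 : ((2 * b - a) * dist B Dstar) ^ 2 = (a * dist A Dstar) ^ 2 := by
    rw [mul_pow, mul_pow, hBD2, hAD2]
    linear_combination a ^ 2 * hkey0 - a ^ 2 * hsum + (a ^ 2 / 2) * hs1
  have hfin : (2 * b - a) * dist B Dstar = a * dist A Dstar := by
    have h2ba : (0:ℝ) ≤ 2 * b - a := by linarith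
    have h1 : (2 * b - a) * dist B Dstar = Real.sqrt (((2 * b - a) * dist B Dstar) ^ 2) :=
      (Real.sqrt_sq (mul_nonneg h2ba dist_nonneg)).symm
    have h2 : a * dist A Dstar = Real.sqrt ((a * dist A Dstar) ^ 2) :=
      (Real.sqrt_sq (mul_nonneg ha.le dist_nonneg)).symm
    rw [h1, h2, hfin2]
  rw [div_eq_div_iff ha.ne' hb0.ne']
  linarith [hfin]
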